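/- Let H be an n×n Hermitian complex matrix such that every diagonal entry satisfies H_{ii} ≥ L for some real L > 0, and let S = Σ_{i≠j} |H_{ij}|². Then rank(H) ≥ L²n²/(nL² + S) = n − nS/(nL² + S). -/

import Mathlib

open Matrix BigOperators
open scoped ComplexOrder

noncomputable section


private lemma trace_eq_sum_eigs {n : ℕ} (A : Matrix (Fin n) (Fin n) ℂ) (hA : A.IsHermitian) :
    A.trace = ∑ i, (hA.eigenvalues i : ℂ) := by
  conv_lhs => rw [hA.spectral_theorem]
  rw [Unitary.conjStarAlgAut_apply]
  rw [trace_mul_cycle]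
  simp [Matrix.mem_unitaryGroup_iff'.mp (hA.eigenvectorUnitary).2, trace_diagonal]

private lemma trace_sq_eq_sum_eigs {n : ℕ} (A : Matrix (Fin n) (Fin n) ℂ) (hA : A.IsHermitian) :
    (A * A).trace = ∑ i, (hA.eigenvalues i : ℂ) ^ 2 := by
  conv_lhs => rw [hA.spectral_theorem]
  rw [Unitary.conjStarAlgAut_apply]
  rw [show ∀ U D : Matrix (Fin n) (Fin n) ℂ,
      (U*D*star U) * (U*D*star U) = U*(D*(star U * U)*D)*star U by intros; noncomm_ring]
  rw [Matrix.mem_unitaryGroup_iff'.mp (hA.eigenvectorUnitary).2]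
  rw [trace_mul_cycle]
  simp [Matrix.mem_unitaryGroup_iff'.mp (hA.eigenvectorUnitary).2, trace_diagonal,
    diagonal_mul_diagonal, sq]

private lemma key_rank_bound {n : ℕ} (A : Matrix (Fin n) (Fin n) ℂ) (hA : A.IsHermitian)
    (h1 : ∀ i, A i i = 1) :
    (n : ℝ)^2 ≤ (A.rank : ℝ) * ∑ i, ∑ j, ‖A i j‖ ^ 2 := by
  set lam := hA.eigenvalues with hlam
  have htr : (∑ i, lam i : ℝ) = n := by
    have := trace_eq_sum_eigs A hA
    rw [Matrix.trace] at this
    simp only [Matrix.diag, h1, Finset.sum_const, Finset.card_univ, Fintype.card_fin,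
      nsmul_eq_mul, mul_one] at this
    exact_mod_cast this.symm
  have htr2 : (∑ i, ∑ j, ‖A i j‖ ^ 2) = ∑ i, lam i ^ 2 := by
    have := trace_sq_eq_sum_eigs A hA
    rw [Matrix.trace] at this
    have hdiag : ∀ i, Matrix.diag (A * A) i = ∑ j, (‖A i j‖ ^ 2 : ℝ) := by
      intro i
      simp only [Matrix.diag, Matrix.mul_apply]
      rw [Complex.ofReal_sum]
      refine Finset.sum_congr rfl fun j _ => ?_
      have : A j i = star (A i j) := by
        have := congrFun (congrFun hA j) i
        simpa [Matrix.conjTranspose_apply] using this.symm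
      rw [this, RCLike.star_def, Complex.mul_conj', Complex.sq_norm]
      simp [Complex.normSq_eq_norm_sq]
    simp only [hdiag] at this
    rw [← Complex.ofReal_sum] at this
    have : (∑ i, ∑ j, ‖A i j‖ ^ 2 : ℝ) = ∑ i, (lam i : ℝ)^2 := by
      exact_mod_cast this
    exact this
  rw [htr2, ← htr]
  set s := Finset.univ.filter (fun i => lam i ≠ 0) with hs
  have hcard : (A.rank : ℝ) = s.card := by
    rw [hA.rank_eq_card_non_zero_eigs]
    norm_cast
    simp [hs, hlam, Fintype.card_subtype]
  have h1' : (∑ i, lam i) = ∑ i ∈ s, lam i := by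
    rw [Finset.sum_filter_of_ne]; intro i _ h; exact fun hz => h (by rw [hz])
  have h2' : (∑ i ∈ s, lam i ^ 2) ≤ ∑ i, lam i ^ 2 :=
    Finset.sum_le_sum_of_subset_of_nonneg (Finset.filter_subset _ _)
      (fun i _ _ => sq_nonneg _)
  calc (∑ i, lam i)^2 = (∑ i ∈ s, lam i)^2 := by rw [h1']
    _ ≤ s.card * ∑ i ∈ s, lam i ^ 2 := by exact sq_sum_le_card_mul_sum_sq
    _ ≤ (A.rank : ℝ) * ∑ i, lam i ^ 2 := by
        rw [hcard]; exact mul_le_mul_of_nonneg_left h2' (by positivity)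

/-- Lemma 3.5: rank lower bound for diagonal dominant Hermitian matrices. -/
theorem diag_dominant_rank {n : ℕ} (H : Matrix (Fin n) (Fin n) ℂ)
    (hH : H.IsHermitian) (L : ℝ) (hL : 0 < L)
    (hdiag : ∀ i, L ≤ (H i i).re)
    (S : ℝ)
    (hS : S = ∑ i, ∑ j, if i = j then 0 else ‖H i j‖ ^ 2) :
    L ^ 2 * (n : ℝ) ^ 2 / ((n : ℝ) * L ^ 2 + S) ≤ (H.rank : ℝ) := by
  have hS0 : 0 ≤ S := by
    rw [hS]
    apply Finset.sum_nonneg; intro i _; apply Finset.sum_nonneg; intro j _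
    split <;> positivity
  rcases Nat.eq_zero_or_pos n with hn | hn
  · subst hn; simp
  -- setup
  set d : Fin n → ℝ := fun i => (H i i).re with hd
  have hdpos : ∀ i, 0 < d i := fun i => lt_of_lt_of_le hL (hdiag i)
  set e : Fin n → ℂ := fun i => ((Real.sqrt (d i))⁻¹ : ℝ) with he
  set D : Matrix (Fin n) (Fin n) ℂ := diagonal e with hD
  set A : Matrix (Fin n) (Fin n) ℂ := D * H * D with hA
  have hestar : ∀ i, star (e i) = e i := by intro i; simp [he]
  have hDH : D.IsHermitian := by
    have hse : star e = e := funext hestar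
    rw [Matrix.IsHermitian, hD, diagonal_conjTranspose, hse]
  have hAH : A.IsHermitian := by
    rw [Matrix.IsHermitian, hA, conjTranspose_mul, conjTranspose_mul, hDH.eq, hH.eq, mul_assoc]
  have hDdet : IsUnit D.det := by
    rw [hD, det_diagonal]
    rw [isUnit_iff_ne_zero]
    apply Finset.prod_ne_zero_iff.mpr
    intro i _
    simp only [he, ne_eq, Complex.ofReal_eq_zero, inv_eq_zero]
    exact ne_of_gt (Real.sqrt_pos.mpr (hdpos i))
  have hrank : A.rank = H.rank := by
    rw [hA, rank_mul_eq_left_of_isUnit_det _ _ hDdet, rank_mul_eq_right_of_isUnit_det _ _ hDdet]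
  have hAapp : ∀ i j, A i j = e i * H i j * e j := by
    intro i j
    rw [hA, hD, Matrix.mul_diagonal, Matrix.diagonal_mul]
  have hAdiag : ∀ i, A i i = 1 := by
    intro i
    rw [hAapp]
    have hHii : H i i = ((d i : ℝ) : ℂ) := (hH.coe_re_apply_self i).symm
    have hr : ((Real.sqrt (d i))⁻¹ : ℝ) * d i * (Real.sqrt (d i))⁻¹ = 1 := by
      rw [show ((Real.sqrt (d i))⁻¹ : ℝ) * d i * (Real.sqrt (d i))⁻¹
          = d i / (Real.sqrt (d i))^2 by ring, Real.sq_sqrt (hdpos i).le,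
        div_self (hdpos i).ne']
    rw [hHii, he]
    simp only
    rw [← Complex.ofReal_one, ← hr]
    push_cast
    ring
  -- bound entries
  have hAbound : ∀ i j, i ≠ j → ‖A i j‖ ^ 2 ≤ ‖H i j‖ ^ 2 / L ^ 2 := by
    intro i j hij
    rw [hAapp]
    simp only [he, norm_mul, Complex.norm_real, Real.norm_eq_abs]
    have h1 : |((Real.sqrt (d i))⁻¹ : ℝ)| ≤ (Real.sqrt L)⁻¹ := by
      rw [abs_of_nonneg (by positivity)]
      exact inv_anti₀ (Real.sqrt_pos.mpr hL) (Real.sqrt_le_sqrt (hdiag i))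
    have h2 : |((Real.sqrt (d j))⁻¹ : ℝ)| ≤ (Real.sqrt L)⁻¹ := by
      rw [abs_of_nonneg (by positivity)]
      exact inv_anti₀ (Real.sqrt_pos.mpr hL) (Real.sqrt_le_sqrt (hdiag j))
    have hLs : ((Real.sqrt L)⁻¹)^2 = L⁻¹ := by
      rw [← Real.sqrt_inv, Real.sq_sqrt (by positivity)]
    have habs : 0 ≤ ‖H i j‖ := norm_nonneg _
    calc (|((Real.sqrt (d i))⁻¹:ℝ)| * ‖H i j‖ * |((Real.sqrt (d j))⁻¹:ℝ)|)^2
        ≤ ((Real.sqrt L)⁻¹ * ‖H i j‖ * (Real.sqrt L)⁻¹)^2 := by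
          apply pow_le_pow_left₀ (by positivity)
          have := mul_le_mul (mul_le_mul h1 le_rfl habs (by positivity)) h2 (abs_nonneg _)
            (by positivity)
          exact this
      _ = ‖H i j‖ ^ 2 / L ^ 2 := by
          rw [show ((Real.sqrt L)⁻¹ * ‖H i j‖ * (Real.sqrt L)⁻¹)^2
            = ((Real.sqrt L)⁻¹^2) * ((Real.sqrt L)⁻¹^2) * ‖H i j‖^2 by ring,
            hLs, ← mul_inv, show L * L = L^2 by ring, inv_mul_eq_div]
  -- sum bound
  have hsum : (∑ i, ∑ j, ‖A i j‖ ^ 2) ≤ n + S / L ^ 2 := by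
    have : (∑ i, ∑ j, ‖A i j‖ ^ 2)
        ≤ ∑ i : Fin n, ∑ j : Fin n, ((if i = j then 1 else 0)
            + (if i = j then 0 else ‖H i j‖ ^ 2) / L ^ 2) := by
      apply Finset.sum_le_sum; intro i _; apply Finset.sum_le_sum; intro j _
      by_cases hij : i = j
      · subst hij; simp [hAdiag i]
      · simpa [hij] using hAbound i j hij
    refine this.trans_eq ?_
    rw [hS]
    simp only [Finset.sum_add_distrib, ← Finset.sum_div]
    rw [Finset.sum_div]
    congr 1
    simp [Finset.sum_ite_eq]
  -- finish
  have hkey := key_rank_bound A hAH hAdiag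
  rw [hrank] at hkey
  have hrk0 : (0:ℝ) ≤ (H.rank : ℝ) := by positivity
  have hmain : (n:ℝ)^2 ≤ (H.rank:ℝ) * (n + S / L^2) :=
    hkey.trans (mul_le_mul_of_nonneg_left hsum hrk0)
  have hden : (0:ℝ) < (n:ℝ) * L^2 + S := by
    have : (0:ℝ) < (n:ℝ) := by exact_mod_cast hn
    positivity
  rw [div_le_iff₀ hden]
  have hL2 : (0:ℝ) < L^2 := by positivity
  have e1 : ((n:ℝ) + S/L^2) * L^2 = (n:ℝ)*L^2 + S := by field_simp
  calc L^2 * (n:ℝ)^2 = (n:ℝ)^2 * L^2 := by ring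
    _ ≤ ((H.rank:ℝ) * ((n:ℝ) + S/L^2)) * L^2 := mul_le_mul_of_nonneg_right hmain hL2.le
    _ = (H.rank:ℝ) * ((n:ℝ)*L^2 + S) := by rw [mul_assoc, e1]
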